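/- For every ρ ∈ [0,∞) one has χ(ρ) < 1. In particular, since the Dirac mass δ₀ at 0 satisfies S(δ₀) = 2 and I(δ₀) = 0, one always has χ(ρ) ≤ 1, and the inequality is strict for every finite ρ. -/

import Mathlib

open scoped ENNReal


/-- `S(μ) = ∑_{x∈ℤ} (√μ(x+1) − √μ(x))²`. -/
noncomputable def Sfun (μ : ℤ → ℝ) : ℝ :=
  ∑' x : ℤ, (Real.sqrt (μ (x + 1)) - Real.sqrt (μ x)) ^ 2

/-- `I(μ) = −∑_{x∈ℤ} μ(x) log μ(x) ∈ [0,∞]` (with `0 log 0 = 0`). -/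
noncomputable def Ifun (μ : ℤ → ℝ) : ℝ≥0∞ :=
  ∑' x : ℤ, ENNReal.ofReal (-(μ x * Real.log (μ x)))

/-- `μ` is a probability mass function on `ℤ`. -/
def IsPMF (μ : ℤ → ℝ) : Prop := (∀ x, 0 ≤ μ x) ∧ HasSum μ 1

/-- `χ(ρ) = (1/2) inf_μ [S(μ) + ρ I(μ)]`, the infimum over probability mass functions on `ℤ`. -/
noncomputable def chi (ρ : ℝ≥0∞) : ℝ≥0∞ :=
  (1 / 2) * ⨅ (μ : ℤ → ℝ) (_ : IsPMF μ), (ENNReal.ofReal (Sfun μ) + ρ * Ifun μ)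

/-- The two-point measure with mass `1-ε` at `0` and `ε` at `1`. -/
noncomputable def tp (ε : ℝ) : ℤ → ℝ := fun x => if x = 0 then 1 - ε else if x = 1 then ε else 0

lemma tp_pmf (ε : ℝ) (h0 : 0 ≤ ε) (h1 : ε ≤ 1) : IsPMF (tp ε) := by
  constructor
  · intro x
    unfold tp
    split_ifs <;> linarith
  · have h : HasSum (fun x : ℤ => (if x = 0 then (1 - ε : ℝ) else 0) + (if x = 1 then ε else 0)) ((1 - ε) + ε) :=
      (hasSum_ite_eq (0 : ℤ) (1 - ε)).add (hasSum_ite_eq (1 : ℤ) ε)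
    have : (fun x : ℤ => (if x = 0 then (1 - ε : ℝ) else 0) + (if x = 1 then ε else 0)) = tp ε := by
      funext x
      unfold tp
      split_ifs with hx hy <;> simp_all
    rw [this] at h
    simpa using h

lemma tp_S (ε : ℝ) (h0 : 0 ≤ ε) (h1 : ε ≤ 1) :
    Sfun (tp ε) = 2 - 2 * (Real.sqrt ε * Real.sqrt (1 - ε)) := by
  have hsum : Sfun (tp ε) = ∑ x ∈ ({-1, 0, 1} : Finset ℤ),
      (Real.sqrt (tp ε (x + 1)) - Real.sqrt (tp ε x)) ^ 2 := by
    apply tsum_eq_sum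
    intro x hx
    simp only [Finset.mem_insert, Finset.mem_singleton] at hx
    push_neg at hx
    obtain ⟨hm1, h0', h1'⟩ := hx
    have e1 : tp ε x = 0 := by unfold tp; simp [h0', h1']
    have e2 : tp ε (x + 1) = 0 := by
      unfold tp
      have : x + 1 ≠ 0 := by omega
      have : x + 1 ≠ 1 := by omega
      simp_all
    simp [e1, e2]
  rw [hsum]
  have ht0 : tp ε 0 = 1 - ε := by unfold tp; simp
  have ht1 : tp ε 1 = ε := by unfold tp; simp
  have htm1 : tp ε (-1) = 0 := by unfold tp; simp
  have ht2 : tp ε 2 = 0 := by unfold tp; simp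
  have : ({-1, 0, 1} : Finset ℤ).sum (fun x => (Real.sqrt (tp ε (x + 1)) - Real.sqrt (tp ε x)) ^ 2)
      = (Real.sqrt (tp ε 0) - Real.sqrt (tp ε (-1))) ^ 2
        + (Real.sqrt (tp ε 1) - Real.sqrt (tp ε 0)) ^ 2
        + (Real.sqrt (tp ε 2) - Real.sqrt (tp ε 1)) ^ 2 := by
    rw [show ({-1, 0, 1} : Finset ℤ) = {-1} ∪ {0} ∪ {1} by rfl]
    rw [Finset.sum_union (by decide), Finset.sum_union (by decide)]
    norm_num
  rw [this, ht0, ht1, htm1, ht2]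
  have hs1 : Real.sqrt (1 - ε) ^ 2 = 1 - ε := Real.sq_sqrt (by linarith)
  have hs2 : Real.sqrt ε ^ 2 = ε := Real.sq_sqrt h0
  rw [Real.sqrt_zero]
  ring_nf
  nlinarith [hs1, hs2]

lemma tp_I (ε : ℝ) :
    Ifun (tp ε) = ENNReal.ofReal (-((1 - ε) * Real.log (1 - ε))) + ENNReal.ofReal (-(ε * Real.log ε)) := by
  have hsum : Ifun (tp ε) = ∑ x ∈ ({0, 1} : Finset ℤ),
      ENNReal.ofReal (-(tp ε x * Real.log (tp ε x))) := by
    apply tsum_eq_sum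
    intro x hx
    simp only [Finset.mem_insert, Finset.mem_singleton] at hx
    push_neg at hx
    have : tp ε x = 0 := by unfold tp; simp [hx.1, hx.2]
    simp [this]
  rw [hsum]
  have ht0 : tp ε 0 = 1 - ε := by unfold tp; simp
  have ht1 : tp ε 1 = ε := by unfold tp; simp
  rw [Finset.sum_insert (by decide), Finset.sum_singleton, ht0, ht1]

lemma key_ineq (r : ℝ) (hr : 0 ≤ r) :
    ∃ ε : ℝ, 0 < ε ∧ ε ≤ 1/2 ∧
      (2 - 2 * (Real.sqrt ε * Real.sqrt (1 - ε)))
        + r * ((-((1 - ε) * Real.log (1 - ε))) + (-(ε * Real.log ε))) < 2 := by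
  set δ : ℝ := 1 / (6 * r + 6) with hδdef
  have hδ0 : 0 < δ := by positivity
  have hδ6 : δ ≤ 1 / 6 := by
    rw [hδdef]
    rw [div_le_div_iff₀ (by linarith) (by norm_num)]
    linarith
  set ε : ℝ := δ ^ 4 with hεdef
  have hε0 : 0 < ε := by positivity
  have hε : ε ≤ 1 / 2 := by
    have : δ ^ 4 ≤ (1/6 : ℝ) ^ 4 := by
      apply pow_le_pow_left₀ hδ0.le hδ6
    rw [hεdef]; nlinarith
  refine ⟨ε, hε0, hε, ?_⟩
  have hlogδ : -Real.log δ ≤ 1 / δ - 1 := by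
    have := Real.log_le_sub_one_of_pos (show (0:ℝ) < 1/δ by positivity)
    rw [one_div, Real.log_inv] at this; rw [one_div]; exact this
  have hδmul : δ * (1 / δ) = 1 := by field_simp
  have hB : -(ε * Real.log ε) ≤ 4 * δ ^ 3 := by
    have hlogε : Real.log ε = 4 * Real.log δ := by
      rw [hεdef, Real.log_pow]; push_cast; ring
    rw [hlogε, hεdef]
    have h1 : δ * (-Real.log δ) ≤ 1 - δ := by nlinarith
    nlinarith [pow_pos hδ0 3, pow_pos hδ0 4]
  have hA : -((1 - ε) * Real.log (1 - ε)) ≤ 2 * δ ^ 3 := by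
    have h1ε : (0:ℝ) < 1 - ε := by linarith
    have hlog : -Real.log (1 - ε) ≤ 1 / (1 - ε) - 1 := by
      have := Real.log_le_sub_one_of_pos (show (0:ℝ) < 1/(1-ε) by positivity)
      rw [one_div, Real.log_inv] at this; rw [one_div]; exact this
    have hfrac : 1 / (1 - ε) - 1 ≤ 2 * ε := by
      rw [div_sub_one (by linarith), div_le_iff₀ h1ε]
      nlinarith
    have hlogpos : 0 ≤ -Real.log (1 - ε) := by
      have : Real.log (1 - ε) ≤ 0 := Real.log_nonpos (by linarith) (by linarith)
      linarith
    have hδ1 : δ ≤ 1 := by linarith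
    have : -((1 - ε) * Real.log (1 - ε)) ≤ -Real.log (1 - ε) := by nlinarith
    have : -Real.log (1 - ε) ≤ 2 * ε := le_trans hlog hfrac
    have : ε ≤ δ ^ 3 := by rw [hεdef]; nlinarith [pow_pos hδ0 3]
    nlinarith [hlogpos]
  have hrδ : 6 * r * δ < 1 := by
    rw [hδdef]
    rw [mul_one_div, div_lt_one (by linarith)]
    linarith
  have hAB : r * ((-((1 - ε) * Real.log (1 - ε))) + (-(ε * Real.log ε))) < δ ^ 2 := by
    have h6 : r * ((-((1 - ε) * Real.log (1 - ε))) + (-(ε * Real.log ε))) ≤ r * (6 * δ ^ 3) := by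
      apply mul_le_mul_of_nonneg_left _ hr
      linarith
    have : r * (6 * δ ^ 3) < δ ^ 2 := by nlinarith [pow_pos hδ0 2]
    linarith
  have hsqε : Real.sqrt ε = δ ^ 2 := by
    rw [hεdef, show δ ^ 4 = (δ ^ 2) ^ 2 by ring, Real.sqrt_sq (by positivity)]
  have hsq1ε : (1:ℝ)/2 ≤ Real.sqrt (1 - ε) := by
    have : Real.sqrt (1/4) ≤ Real.sqrt (1 - ε) := Real.sqrt_le_sqrt (by linarith)
    have h14 : Real.sqrt (1/4 : ℝ) = 1/2 := by
      rw [show (1/4 : ℝ) = (1/2)^2 by norm_num, Real.sqrt_sq (by norm_num)]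
    linarith
  have hlb : δ ^ 2 ≤ 2 * (Real.sqrt ε * Real.sqrt (1 - ε)) := by
    rw [hsqε]
    nlinarith [pow_pos hδ0 2]
  linarith

/-- For every finite ρ one has χ(ρ) < 1. -/
theorem chi_lt_one (ρ : ℝ≥0∞) (hρ : ρ ≠ ⊤) : chi ρ < 1 := by
  set r : ℝ := ρ.toReal with hrdef
  have hr : 0 ≤ r := ENNReal.toReal_nonneg
  have hρr : ρ = ENNReal.ofReal r := (ENNReal.ofReal_toReal hρ).symm
  obtain ⟨ε, hε0, hε, hlt⟩ := key_ineq r hr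
  set A : ℝ := -((1 - ε) * Real.log (1 - ε)) with hAdef
  set B : ℝ := -(ε * Real.log ε) with hBdef
  have hA0 : 0 ≤ A := by
    have hlog : Real.log (1 - ε) ≤ 0 := Real.log_nonpos (by linarith) (by linarith)
    rw [hAdef]; nlinarith
  have hB0 : 0 ≤ B := by
    have hlog : Real.log ε ≤ 0 := Real.log_nonpos (by linarith) (by linarith)
    rw [hBdef]; nlinarith
  have hS : Sfun (tp ε) = 2 - 2 * (Real.sqrt ε * Real.sqrt (1 - ε)) :=
    tp_S ε hε0.le (by linarith)
  have hI : Ifun (tp ε) = ENNReal.ofReal (A + B) := by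
    rw [tp_I ε, ← ENNReal.ofReal_add hA0 hB0]
  have hval : ENNReal.ofReal (Sfun (tp ε)) + ρ * Ifun (tp ε)
      = ENNReal.ofReal (Sfun (tp ε) + r * (A + B)) := by
    rw [hI, hρr, ← ENNReal.ofReal_mul hr, ← ENNReal.ofReal_add _ (by positivity)]
    rw [hS]
    have h1 : Real.sqrt ε * Real.sqrt (1 - ε) ≤ 1 := by
      have h2 : Real.sqrt ε ≤ 1 := Real.sqrt_le_one.mpr (by linarith)
      have h3 : Real.sqrt (1 - ε) ≤ 1 := Real.sqrt_le_one.mpr (by linarith)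
      nlinarith [Real.sqrt_nonneg ε, Real.sqrt_nonneg (1 - ε)]
    linarith
  have hvlt : ENNReal.ofReal (Sfun (tp ε)) + ρ * Ifun (tp ε) < 2 := by
    rw [hval]
    calc ENNReal.ofReal (Sfun (tp ε) + r * (A + B)) < ENNReal.ofReal 2 := by
          rw [ENNReal.ofReal_lt_ofReal_iff (by norm_num)]
          rw [hS]; linarith
      _ = 2 := by norm_num
  have hinf : (⨅ (μ : ℤ → ℝ) (_ : IsPMF μ), (ENNReal.ofReal (Sfun μ) + ρ * Ifun μ))
      ≤ ENNReal.ofReal (Sfun (tp ε)) + ρ * Ifun (tp ε) :=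
    iInf₂_le (tp ε) (tp_pmf ε hε0.le (by linarith))
  have hle : chi ρ ≤ (1/2 : ℝ≥0∞) * (ENNReal.ofReal (Sfun (tp ε)) + ρ * Ifun (tp ε)) := by
    unfold chi
    exact mul_le_mul_right hinf _
  calc chi ρ ≤ (1/2 : ℝ≥0∞) * (ENNReal.ofReal (Sfun (tp ε)) + ρ * Ifun (tp ε)) := hle
    _ < (1/2 : ℝ≥0∞) * 2 := by
        rw [ENNReal.mul_lt_mul_iff_right (by norm_num) (by norm_num)]
        exact hvlt
    _ = 1 := by
        rw [one_div]
        exact ENNReal.inv_mul_cancel (by norm_num) (by norm_num)
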